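/- For any factorial, the Robbins bounds hold: √(2πN) (N/e)^N e^{1/(12N+1)} ≤ N! ≤ √(2πN) (N/e)^N e^{1/(12N)} for all positive integers N. -/

import Mathlib

open Real Filter Nat Stirling
open scoped Topology

lemma robbins_aux_geo_sum_aux (c : ℝ) (hc0 : 0 ≤ c) (hc1 : c < 1) :
    HasSum (fun k : ℕ => c ^ (k + 1)) (c / (1 - c)) := by
  have := (hasSum_geometric_of_lt_one hc0 hc1).mul_left c
  simp_rw [← _root_.pow_succ'] at this
  rw [div_eq_mul_inv]
  exact this

lemma robbins_aux_diff_le (m : ℕ) :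
    Real.log (stirlingSeq (m + 1)) - Real.log (stirlingSeq (m + 2)) ≤
      1 / (12 * ((m : ℝ) + 1)) - 1 / (12 * ((m : ℝ) + 2)) := by
  set x : ℝ := 1 / (2 * ((m : ℝ) + 1) + 1) with hx
  have hm : (0:ℝ) ≤ (m:ℝ) := Nat.cast_nonneg m
  have hx0 : 0 < x := by positivity
  have hxlt : x ≤ 1 / 3 := by
    rw [hx, div_le_div_iff₀ (by positivity) (by norm_num)]
    nlinarith
  have hc0 : (0:ℝ) ≤ x ^ 2 := sq_nonneg x
  have hc1 : x ^ 2 < 1 := by nlinarith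
  have hgeo := (robbins_aux_geo_sum_aux (x ^ 2) hc0 hc1).mul_left (1/3)
  have hs := log_stirlingSeq_diff_hasSum m
  have hterm : ∀ k : ℕ, (1 : ℝ) / (2 * ↑(k + 1) + 1) * ((1 / (2 * ↑(m + 1) + 1)) ^ 2) ^ (k + 1)
      ≤ 1/3 * (x ^ 2) ^ (k + 1) := by
    intro k
    have h1 : ((1 / (2 * (↑(m + 1):ℝ) + 1)) ^ 2) = x ^ 2 := by push_cast [hx]; ring_nf
    rw [h1]
    have : (1 : ℝ) / (2 * ↑(k + 1) + 1) ≤ 1/3 := by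
      rw [div_le_div_iff₀ (by positivity) (by norm_num)]
      push_cast; nlinarith [Nat.cast_nonneg (α := ℝ) k]
    exact mul_le_mul_of_nonneg_right this (by positivity)
  have hle := hasSum_le hterm hs hgeo
  refine hle.trans (le_of_eq ?_)
  rw [hx]
  have h2 : (2 * ((m:ℝ) + 1) + 1) ≠ 0 := by positivity
  have h5 : (24 + (m:ℝ) * 36 + (m:ℝ)^2 * 12) ≠ 0 := by positivity
  have h6 : (8 + (m:ℝ) * 12 + (m:ℝ)^2 * 4) ≠ 0 := by positivity
  field_simp [h5]
  ring_nf
  linear_combination 3 * (inv_mul_cancel₀ h6)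

lemma robbins_aux_diff_ge (m : ℕ) :
    1 / (12 * ((m : ℝ) + 1) + 1) - 1 / (12 * ((m : ℝ) + 2) + 1) ≤
      Real.log (stirlingSeq (m + 1)) - Real.log (stirlingSeq (m + 2)) := by
  set x : ℝ := 1 / (2 * ((m : ℝ) + 1) + 1) with hx
  have hm : (0:ℝ) ≤ (m:ℝ) := Nat.cast_nonneg m
  have hx0 : 0 < x := by positivity
  have hxlt : x ≤ 1 / 3 := by
    rw [hx, div_le_div_iff₀ (by positivity) (by norm_num)]
    nlinarith
  have hc0 : (0:ℝ) ≤ x ^ 2 / 3 := by positivity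
  have hc1 : x ^ 2 / 3 < 1 := by nlinarith
  have hgeo := robbins_aux_geo_sum_aux (x ^ 2 / 3) hc0 hc1
  have hs := log_stirlingSeq_diff_hasSum m
  have hterm : ∀ k : ℕ, (x ^ 2 / 3) ^ (k + 1) ≤
      (1 : ℝ) / (2 * ↑(k + 1) + 1) * ((1 / (2 * ↑(m + 1) + 1)) ^ 2) ^ (k + 1) := by
    intro k
    have h1 : ((1 / (2 * (↑(m + 1):ℝ) + 1)) ^ 2) = x ^ 2 := by push_cast [hx]; ring_nf
    rw [h1, div_pow]
    have h3 : (2 * (↑(k + 1):ℝ) + 1) ≤ 3 ^ (k + 1) := by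
      have := one_add_mul_le_pow (by norm_num : (-2:ℝ) ≤ 2) (k + 1)
      push_cast at this ⊢
      norm_num at this
      linarith [this]
    have h4 : (1:ℝ) / 3 ^ (k + 1) ≤ 1 / (2 * (↑(k + 1):ℝ) + 1) :=
      one_div_le_one_div_of_le (by positivity) h3
    calc (x ^ 2) ^ (k + 1) / 3 ^ (k + 1) = (x ^ 2) ^ (k + 1) * (1 / 3 ^ (k + 1)) := by ring
    _ ≤ (x ^ 2) ^ (k + 1) * (1 / (2 * (↑(k + 1):ℝ) + 1)) := by
        exact mul_le_mul_of_nonneg_left h4 (by positivity)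
    _ = 1 / (2 * (↑(k + 1):ℝ) + 1) * (x ^ 2) ^ (k + 1) := by ring
  have hle := hasSum_le hterm hgeo hs
  refine le_trans ?_ hle
  have hval : x ^ 2 / 3 / (1 - x ^ 2 / 3) = 1 / (12 * ((m:ℝ)+1) ^ 2 + 12 * ((m:ℝ)+1) + 2) := by
    have h2 : (2 * ((m:ℝ) + 1) + 1) ≠ 0 := by positivity
    have h2' : (0:ℝ) < 1 - x ^ 2 / 3 := by nlinarith
    rw [div_eq_div_iff h2'.ne' (by positivity)]
    rw [hx]
    field_simp
    ring
  rw [hval]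
  have d1 : (12 * ((m:ℝ)+1) + 1) ≠ 0 := by positivity
  have d2 : (12 * ((m:ℝ)+2) + 1) ≠ 0 := by positivity
  have d3 : (0:ℝ) < (12 * ((m:ℝ)+1) + 1) * (12 * ((m:ℝ)+2) + 1) := by positivity
  have d4 : (0:ℝ) < 12 * ((m:ℝ)+1) ^ 2 + 12 * ((m:ℝ)+1) + 2 := by positivity
  rw [div_sub_div _ _ d1 d2, div_le_div_iff₀ d3 d4]
  nlinarith [sq_nonneg ((m:ℝ)+1), hm]

lemma robbins_aux_inv_lin_tendsto (c : ℝ) (hc : 0 ≤ c) :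
    Tendsto (fun m : ℕ => 1 / (12 * ((m:ℝ) + 1) + c)) atTop (𝓝 0) := by
  have h : Tendsto (fun m : ℕ => 12 * ((m:ℝ) + 1) + c) atTop atTop := by
    apply tendsto_atTop_mono (f := fun m : ℕ => (m : ℝ))
    · intro m
      have : (0:ℝ) ≤ (m:ℝ) := Nat.cast_nonneg m
      linarith
    · exact tendsto_natCast_atTop_atTop
  simpa [one_div, Pi.inv_def] using h.inv_tendsto_atTop

lemma robbins_aux_exp_term_tendsto (c : ℝ) (hc : 0 ≤ c) :
    Tendsto (fun m : ℕ => Real.exp (-(1 / (12 * ((m:ℝ) + 1) + c)))) atTop (𝓝 1) := by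
  have := (Real.continuous_exp.tendsto (-(0:ℝ))).comp (robbins_aux_inv_lin_tendsto c hc).neg
  simpa [Function.comp_def] using this

lemma robbins_aux_stirling_tendsto' : Tendsto (fun m : ℕ => stirlingSeq (m + 1)) atTop (𝓝 (√π)) :=
  tendsto_stirlingSeq_sqrt_pi.comp (tendsto_add_atTop_nat 1)

lemma robbins_aux_stirling_upper (m : ℕ) :
    stirlingSeq (m + 1) ≤ √π * Real.exp (1 / (12 * ((m:ℝ) + 1))) := by
  set A : ℕ → ℝ := fun m => stirlingSeq (m + 1) * Real.exp (-(1 / (12 * ((m:ℝ) + 1)))) with hA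
  have hrw : ∀ m : ℕ, A m =
      Real.exp (Real.log (stirlingSeq (m + 1)) - 1 / (12 * ((m:ℝ) + 1))) := by
    intro m
    simp only [hA]
    rw [Real.exp_sub, Real.exp_log (stirlingSeq'_pos m), Real.exp_neg]
    ring
  have hmono : Monotone A := by
    apply monotone_nat_of_le_succ
    intro n
    rw [hrw n, hrw (n + 1), Real.exp_le_exp]
    have := robbins_aux_diff_le n
    have he : ((n:ℝ) + 1 + 1) = (n:ℝ) + 2 := by ring
    push_cast at this ⊢
    rw [he]
    linarith
  have hlim : Tendsto A atTop (𝓝 (√π)) := by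
    have := robbins_aux_stirling_tendsto'.mul (robbins_aux_exp_term_tendsto 0 le_rfl)
    simpa [hA] using this
  have hle : A m ≤ √π := hmono.ge_of_tendsto hlim m
  have hE : 0 < Real.exp (1 / (12 * ((m:ℝ) + 1))) := Real.exp_pos _
  have := mul_le_mul_of_nonneg_right hle hE.le
  calc stirlingSeq (m + 1)
      = A m * Real.exp (1 / (12 * ((m:ℝ) + 1))) := by
        rw [hA]
        simp only [mul_assoc, ← Real.exp_add]
        rw [neg_add_cancel, Real.exp_zero, mul_one]
    _ ≤ √π * Real.exp (1 / (12 * ((m:ℝ) + 1))) := this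

lemma robbins_aux_stirling_lower (m : ℕ) :
    √π * Real.exp (1 / (12 * ((m:ℝ) + 1) + 1)) ≤ stirlingSeq (m + 1) := by
  set B : ℕ → ℝ := fun m => stirlingSeq (m + 1) * Real.exp (-(1 / (12 * ((m:ℝ) + 1) + 1))) with hB
  have hrw : ∀ m : ℕ, B m =
      Real.exp (Real.log (stirlingSeq (m + 1)) - 1 / (12 * ((m:ℝ) + 1) + 1)) := by
    intro m
    simp only [hB]
    rw [Real.exp_sub, Real.exp_log (stirlingSeq'_pos m), Real.exp_neg]
    ring
  have hanti : Antitone B := by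
    apply antitone_nat_of_succ_le
    intro n
    rw [hrw n, hrw (n + 1), Real.exp_le_exp]
    have := robbins_aux_diff_ge n
    have he : ((n:ℝ) + 1 + 1) = (n:ℝ) + 2 := by ring
    push_cast at this ⊢
    rw [he]
    linarith
  have hlim : Tendsto B atTop (𝓝 (√π)) := by
    have := robbins_aux_stirling_tendsto'.mul (robbins_aux_exp_term_tendsto 1 zero_le_one)
    simpa [hB] using this
  have hle : √π ≤ B m := hanti.le_of_tendsto hlim m
  have hE : 0 < Real.exp (1 / (12 * ((m:ℝ) + 1) + 1)) := Real.exp_pos _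
  have h2 := mul_le_mul_of_nonneg_right hle hE.le
  calc √π * Real.exp (1 / (12 * ((m:ℝ) + 1) + 1)) ≤
      B m * Real.exp (1 / (12 * ((m:ℝ) + 1) + 1)) := h2
    _ = stirlingSeq (m + 1) := by
        rw [hB]
        simp only [mul_assoc, ← Real.exp_add]
        rw [neg_add_cancel, Real.exp_zero, mul_one]

/-- Robbins' bounds for the factorial:
`√(2πN) (N/e)^N e^{1/(12N+1)} ≤ N! ≤ √(2πN) (N/e)^N e^{1/(12N)}`. -/
theorem robbins_factorial_bounds (N : ℕ) (hN : 1 ≤ N) :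
    Real.sqrt (2 * Real.pi * N) * ((N : ℝ) / Real.exp 1) ^ N *
        Real.exp (1 / (12 * (N : ℝ) + 1)) ≤ (N.factorial : ℝ) ∧
    (N.factorial : ℝ) ≤ Real.sqrt (2 * Real.pi * N) * ((N : ℝ) / Real.exp 1) ^ N *
        Real.exp (1 / (12 * (N : ℝ))) := by
  obtain ⟨m, rfl⟩ : ∃ m, N = m + 1 :=
    ⟨N - 1, (Nat.succ_pred_eq_of_pos hN).symm⟩
  have hlow := robbins_aux_stirling_lower m
  have hupp := robbins_aux_stirling_upper m
  have hcast : ((m + 1 : ℕ) : ℝ) = (m : ℝ) + 1 := by push_cast; ring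
  have hP : 0 < √(2 * ((m + 1 : ℕ) : ℝ)) * (((m + 1 : ℕ) : ℝ) / Real.exp 1) ^ (m + 1) := by
    rw [hcast]; positivity
  have hst : stirlingSeq (m + 1) = ((m + 1).factorial : ℝ) /
      (√(2 * ((m + 1 : ℕ) : ℝ)) * (((m + 1 : ℕ) : ℝ) / Real.exp 1) ^ (m + 1)) := rfl
  have hsqrt : Real.sqrt (2 * π * ((m + 1 : ℕ) : ℝ)) =
      √π * Real.sqrt (2 * ((m + 1 : ℕ) : ℝ)) := by
    rw [show (2:ℝ) * π * ((m + 1 : ℕ) : ℝ) = π * (2 * ((m + 1 : ℕ) : ℝ)) by ring,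
      Real.sqrt_mul Real.pi_pos.le]
  constructor
  · have key : √π * Real.exp (1 / (12 * ((m + 1 : ℕ) : ℝ) + 1)) ≤ stirlingSeq (m + 1) := by
      push_cast
      exact hlow
    rw [hst] at key
    have h2 := (le_div_iff₀ hP).mp key
    calc Real.sqrt (2 * π * ((m + 1 : ℕ) : ℝ)) * (((m + 1 : ℕ) : ℝ) / Real.exp 1) ^ (m + 1) *
          Real.exp (1 / (12 * ((m + 1 : ℕ) : ℝ) + 1))
        = √π * Real.exp (1 / (12 * ((m + 1 : ℕ) : ℝ) + 1)) *
          (√(2 * ((m + 1 : ℕ) : ℝ)) * (((m + 1 : ℕ) : ℝ) / Real.exp 1) ^ (m + 1)) := by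
          rw [hsqrt]; ring
      _ ≤ ((m + 1).factorial : ℝ) := h2
  · have key : stirlingSeq (m + 1) ≤ √π * Real.exp (1 / (12 * ((m + 1 : ℕ) : ℝ))) := by
      push_cast
      exact hupp
    rw [hst] at key
    have h2 := (div_le_iff₀ hP).mp key
    calc ((m + 1).factorial : ℝ)
        ≤ √π * Real.exp (1 / (12 * ((m + 1 : ℕ) : ℝ))) *
          (√(2 * ((m + 1 : ℕ) : ℝ)) * (((m + 1 : ℕ) : ℝ) / Real.exp 1) ^ (m + 1)) := h2
      _ = Real.sqrt (2 * π * ((m + 1 : ℕ) : ℝ)) * (((m + 1 : ℕ) : ℝ) / Real.exp 1) ^ (m + 1) *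
          Real.exp (1 / (12 * ((m + 1 : ℕ) : ℝ))) := by
          rw [hsqrt]; ring
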